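/- Let P ⊂ ℝ^d be a rational d-polytope and let 𝒞_P = ⋂_{i=1}^m {x ∈ ℝ^{d+1} : ⟨ã_i, x⟩ ≥ 0} be the unique irredundant presentation of the cone over P with each ã_i ∈ ℤ^{d+1} primitive. For u, v ∈ ℝ^{d+1}, the following are equivalent: (1) (𝒞_P + u) ∩ ℤ^{d+1} = (𝒞_P + v) ∩ ℤ^{d+1}; (2) ⌈⟨ã_i, u⟩⌉ = ⌈⟨ã_i, v⟩⌉ for all i = 1, …, m. -/

import Mathlib

open Set Pointwise

noncomputable section

/-- The lattice `ℤ^d` inside `ℝ^d`. -/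
def latticePts (d : ℕ) : Set (Fin d → ℝ) := {x | ∀ i, ∃ n : ℤ, x i = (n : ℝ)}

/-- A point of `ℝ^d` with all coordinates rational. -/
def IsRationalPoint {d : ℕ} (x : Fin d → ℝ) : Prop := ∀ i, ∃ q : ℚ, x i = (q : ℝ)

/-- A rational `d`-polytope in `ℝ^d`: the convex hull of finitely many rational points
whose affine span is all of `ℝ^d`. -/
def IsRationalDPolytope {d : ℕ} (P : Set (Fin d → ℝ)) : Prop :=
  ∃ V : Finset (Fin d → ℝ), (∀ x ∈ V, IsRationalPoint x) ∧
    P = convexHull ℝ (V : Set (Fin d → ℝ)) ∧ affineSpan ℝ P = ⊤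

/-- The cone over a polytope `P ⊂ ℝ^d`: `𝒞_P = {s(x, 1) : s ≥ 0, x ∈ P} ⊂ ℝ^{d+1}`. -/
def coneOver {d : ℕ} (P : Set (Fin d → ℝ)) : Set (Fin (d + 1) → ℝ) :=
  {y | ∃ s : ℝ, 0 ≤ s ∧ ∃ x ∈ P, y = s • (Fin.snoc x 1 : Fin (d + 1) → ℝ)}

open Finset in
lemma finset_gcd_bezout {α : Type*} [DecidableEq α] (s : Finset α) (f : α → ℤ) :
    ∃ g : α → ℤ, ∑ j ∈ s, f j * g j = s.gcd f := by
  induction s using Finset.induction with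
  | empty => exact ⟨0, by simp⟩
  | insert a s ha ih =>
    obtain ⟨g, hg⟩ := ih
    refine ⟨fun j => if j = a then (f a).gcdA (s.gcd f) else (f a).gcdB (s.gcd f) * g j, ?_⟩
    rw [Finset.sum_insert ha, Finset.gcd_insert]
    have : ∑ j ∈ s, f j * (if j = a then (f a).gcdA (s.gcd f) else (f a).gcdB (s.gcd f) * g j)
        = (f a).gcdB (s.gcd f) * ∑ j ∈ s, f j * g j := by
      rw [Finset.mul_sum]
      refine Finset.sum_congr rfl fun j hj => ?_
      rw [if_neg (by rintro rfl; exact ha hj)]; ring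
    simp only [if_pos rfl]
    rw [this, hg]
    have h2 := Int.gcd_eq_gcd_ab (f a) (s.gcd f)
    have h3 : GCDMonoid.gcd (f a) (s.gcd f) = (Int.gcd (f a) (s.gcd f) : ℤ) := by
      exact Int.coe_gcd (f a) (s.gcd f) |>.symm
    rw [h3, h2]
    simp [mul_comm]

lemma rat_scale (y : ℚ) (N : ℕ) (hd : y.den ∣ N) : ∃ z : ℤ, (z : ℚ) = (N : ℚ) * y := by
  obtain ⟨k, hk⟩ := hd
  refine ⟨y.num * k, ?_⟩
  have h0 : (y.den : ℚ) ≠ 0 := by exact_mod_cast y.den_ne_zero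
  have hden : (y.den : ℚ) * y = (y.num : ℚ) := by
    nth_rewrite 2 [← Rat.num_div_den y]
    field_simp
  rw [hk]
  push_cast
  rw [mul_comm (y.den : ℚ) (k : ℚ), mul_assoc, hden]
  ring

/-- An integer point with the same strict sign pattern as a given real point,
with respect to finitely many integral linear forms. -/
lemma sign_int_point {m n : ℕ} (A : Fin m → Fin n → ℤ) (p : Fin n → ℝ)
    (hnz : ∀ j, (∑ l, (A j l : ℝ) * p l) ≠ 0) :
    ∃ w : Fin n → ℤ, ∀ j,
      (0 < ∑ l, (A j l : ℝ) * p l → 1 ≤ ∑ l, A j l * w l) ∧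
      (∑ l, (A j l : ℝ) * p l < 0 → ∑ l, A j l * w l ≤ -1) := by
  rcases Nat.eq_zero_or_pos m with hm | hm
  · subst hm; exact ⟨0, fun j => j.elim0⟩
  have hne : (Finset.univ : Finset (Fin m)).Nonempty := by
    simpa [Finset.univ_nonempty_iff] using Fin.pos_iff_nonempty.mp hm
  set f : Fin m → ℝ := fun j => ∑ l, (A j l : ℝ) * p l with hf
  set ε : ℝ := Finset.univ.inf' hne (fun j => |f j|) with hε
  have hεpos : 0 < ε := by
    rw [hε, Finset.lt_inf'_iff]
    exact fun j _ => abs_pos.mpr (hnz j)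
  set C : ℝ := (∑ j, ∑ l, |(A j l : ℝ)|) + 1 with hC
  have hCpos : 0 < C := by
    have : 0 ≤ ∑ j, ∑ l, |(A j l : ℝ)| :=
      Finset.sum_nonneg fun j _ => Finset.sum_nonneg fun l _ => abs_nonneg _
    linarith
  set δ : ℝ := ε / C with hδ
  have hδpos : 0 < δ := div_pos hεpos hCpos
  have hy : ∀ l : Fin n, ∃ q : ℚ, |(q : ℝ) - p l| < δ := by
    intro l
    obtain ⟨q, h1, h2⟩ := exists_rat_btwn (lt_add_of_pos_right (p l) hδpos)
    exact ⟨q, by rw [abs_sub_lt_iff]; constructor <;> linarith⟩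
  choose y hyd using hy
  have key : ∀ j, |(∑ l, (A j l : ℝ) * (y l : ℝ)) - f j| < ε := by
    intro j
    have h1 : (∑ l, (A j l : ℝ) * (y l : ℝ)) - f j = ∑ l, (A j l : ℝ) * ((y l : ℝ) - p l) := by
      rw [hf]; rw [← Finset.sum_sub_distrib]; congr 1; ext l; ring
    rw [h1]
    calc |∑ l, (A j l : ℝ) * ((y l : ℝ) - p l)| ≤ ∑ l, |(A j l : ℝ) * ((y l : ℝ) - p l)| :=
          Finset.abs_sum_le_sum_abs _ _
      _ ≤ ∑ l, |(A j l : ℝ)| * δ := by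
          refine Finset.sum_le_sum fun l _ => ?_
          rw [abs_mul]
          exact mul_le_mul_of_nonneg_left (le_of_lt (hyd l)) (abs_nonneg _)
      _ = (∑ l, |(A j l : ℝ)|) * δ := by rw [← Finset.sum_mul]
      _ < C * δ := by
          refine mul_lt_mul_of_pos_right ?_ hδpos
          rw [hC]
          have : ∑ l, |(A j l : ℝ)| ≤ ∑ j', ∑ l, |(A j' l : ℝ)| :=
            Finset.single_le_sum (f := fun j' => ∑ l, |(A j' l : ℝ)|)
              (fun j' _ => Finset.sum_nonneg fun l _ => abs_nonneg _) (Finset.mem_univ j)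
          linarith
      _ = ε := by rw [hδ]; field_simp
  set Q : Fin m → ℚ := fun j => ∑ l, (A j l : ℚ) * y l with hQ
  have hQcast : ∀ j, ((Q j : ℚ) : ℝ) = ∑ l, (A j l : ℝ) * (y l : ℝ) := by
    intro j; rw [hQ]; push_cast; rfl
  have hQsign : ∀ j, (0 < f j → 0 < Q j) ∧ (f j < 0 → Q j < 0) := by
    intro j
    have hk := key j
    rw [← hQcast j] at hk
    have hεle : ε ≤ |f j| := Finset.inf'_le _ (Finset.mem_univ j)
    rw [abs_sub_lt_iff] at hk
    constructor
    · intro h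
      have : ε ≤ f j := by rwa [abs_of_pos h] at hεle
      have : (0 : ℝ) < (Q j : ℝ) := by linarith [hk.2]
      exact_mod_cast this
    · intro h
      have : ε ≤ -f j := by rwa [abs_of_neg h] at hεle
      have : ((Q j : ℚ) : ℝ) < 0 := by linarith [hk.1]
      exact_mod_cast this
  set N : ℕ := ∏ l, (y l).den with hN
  have hNpos : 0 < N := Finset.prod_pos fun l _ => (y l).pos
  have hw : ∀ l : Fin n, ∃ z : ℤ, (z : ℚ) = (N : ℚ) * y l := fun l =>
    rat_scale (y l) N (Finset.dvd_prod_of_mem _ (Finset.mem_univ l))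
  choose w hwz using hw
  refine ⟨w, fun j => ?_⟩
  have hsum : ((∑ l, A j l * w l : ℤ) : ℚ) = (N : ℚ) * Q j := by
    push_cast
    rw [hQ, Finset.mul_sum]
    refine Finset.sum_congr rfl fun l _ => ?_
    rw [hwz l]; ring
  have hNQ : (0 : ℚ) < N := by exact_mod_cast hNpos
  constructor
  · intro h
    have h1 : 0 < Q j := (hQsign j).1 h
    have : (0 : ℚ) < ((∑ l, A j l * w l : ℤ) : ℚ) := by rw [hsum]; positivity
    have : (0 : ℤ) < ∑ l, A j l * w l := by exact_mod_cast this
    omega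
  · intro h
    have h1 : Q j < 0 := (hQsign j).2 h
    have : ((∑ l, A j l * w l : ℤ) : ℚ) < 0 := by
      rw [hsum]; exact mul_neg_of_pos_of_neg hNQ h1
    have : (∑ l, A j l * w l : ℤ) < 0 := by exact_mod_cast this
    omega

/-- the linear form `x ↦ ∑ a l * x l` as a linear map -/
def linForm {d : ℕ} (a : Fin d → ℝ) : (Fin d → ℝ) →ₗ[ℝ] ℝ where
  toFun x := ∑ l, a l * x l
  map_add' x y := by simp [mul_add, Finset.sum_add_distrib]
  map_smul' c x := by
    simp only [Pi.smul_apply, smul_eq_mul, RingHom.id_apply, Finset.mul_sum]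
    exact Finset.sum_congr rfl fun l _ => by ring

/-- A full-dimensional cone presented by nonzero linear forms has a point where all the
forms are strictly positive. -/
lemma exists_pos_point {d m : ℕ} (P : Set (Fin d → ℝ)) (hP : IsRationalDPolytope P)
    (A : Fin m → Fin (d + 1) → ℤ)
    (hpres : coneOver P = ⋂ i, {y : Fin (d + 1) → ℝ | 0 ≤ ∑ j, (A i j : ℝ) * y j})
    (hprim : ∀ i, Finset.univ.gcd (A i) = 1) :
    ∃ q : Fin (d + 1) → ℝ, ∀ j, 0 < ∑ l, (A j l : ℝ) * q l := by
  obtain ⟨V, -, hPV, hspan⟩ := hP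
  have hVne : V.Nonempty := by
    rcases V.eq_empty_or_nonempty with h | h
    · exfalso
      rw [hPV, h] at hspan
      simp only [Finset.coe_empty, convexHull_empty] at hspan
      obtain ⟨x, hx⟩ := AffineSubspace.nonempty_of_affineSpan_eq_top ℝ (Fin d → ℝ)
        (Fin d → ℝ) hspan
      exact hx
    · exact h
  have hcard : (0 : ℝ) < (V.card : ℝ) := by exact_mod_cast Finset.card_pos.mpr hVne
  set x0 : Fin d → ℝ := V.centerMass (fun _ => (1 : ℝ)) id with hx0
  have hx0mem : x0 ∈ P := by
    rw [hPV]
    exact V.centerMass_mem_convexHull (fun i _ => zero_le_one)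
      (by simpa using hcard) (fun i hi => Finset.mem_coe.mpr hi)
  have hx0eq : x0 = (V.card : ℝ)⁻¹ • ∑ x ∈ V, x := by
    rw [hx0, Finset.centerMass]
    simp
  have hmem : ∀ x ∈ P, ∀ j, 0 ≤ ∑ l, (A j l : ℝ) * (Fin.snoc x 1 : Fin (d+1) → ℝ) l := by
    intro x hx j
    have : (Fin.snoc x 1 : Fin (d+1) → ℝ) ∈ coneOver P :=
      ⟨1, zero_le_one, x, hx, (one_smul _ _).symm⟩
    rw [hpres] at this
    exact Set.mem_iInter.mp this j
  have hsnoc : ∀ (j : Fin m) (x : Fin d → ℝ),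
      ∑ l, (A j l : ℝ) * (Fin.snoc x 1 : Fin (d+1) → ℝ) l
        = linForm (fun l => (A j l.castSucc : ℝ)) x + (A j (Fin.last d) : ℝ) := by
    intro j x
    rw [Fin.sum_univ_castSucc]
    simp [linForm]
  refine ⟨Fin.snoc x0 1, fun j => ?_⟩
  rcases lt_or_eq_of_le (hmem x0 hx0mem j) with h | h
  · exact h
  exfalso
  set L := linForm (fun l => (A j l.castSucc : ℝ)) with hL
  have havg : L x0 = (V.card : ℝ)⁻¹ * ∑ v ∈ V, L v := by
    rw [hx0eq, map_smul, smul_eq_mul, map_sum]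
  have hvert : ∀ v ∈ V, L v + (A j (Fin.last d) : ℝ) = 0 := by
    have hsum : ∑ v ∈ V, (L v + (A j (Fin.last d) : ℝ)) = 0 := by
      have : (V.card : ℝ) * (L x0 + (A j (Fin.last d) : ℝ)) =
          ∑ v ∈ V, (L v + (A j (Fin.last d) : ℝ)) := by
        rw [Finset.sum_add_distrib, havg, Finset.sum_const, nsmul_eq_mul]
        field_simp
      rw [← this, ← hsnoc j x0, ← h, mul_zero]
    have hnn : ∀ v ∈ V, 0 ≤ L v + (A j (Fin.last d) : ℝ) := by
      intro v hv
      rw [← hsnoc j v]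
      exact hmem v (by rw [hPV]; exact subset_convexHull ℝ _ (Finset.mem_coe.mpr hv)) j
    exact (Finset.sum_eq_zero_iff_of_nonneg hnn).mp hsum
  have hker : vectorSpan ℝ (V : Set (Fin d → ℝ)) ≤ LinearMap.ker L := by
    rw [vectorSpan_def, Submodule.span_le]
    rintro x hx
    rw [Set.mem_vsub] at hx
    obtain ⟨v1, hv1, v2, hv2, rfl⟩ := hx
    rw [SetLike.mem_coe, LinearMap.mem_ker, vsub_eq_sub, map_sub]
    have h1 := hvert v1 hv1
    have h2 := hvert v2 hv2
    linarith
  have hvs : vectorSpan ℝ (V : Set (Fin d → ℝ)) = ⊤ := by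
    have : affineSpan ℝ (V : Set (Fin d → ℝ)) = ⊤ := by
      rw [← affineSpan_convexHull, ← hPV]; exact hspan
    exact AffineSubspace.vectorSpan_eq_top_of_affineSpan_eq_top ℝ (Fin d → ℝ) (Fin d → ℝ) this
  have hL0 : L = 0 := LinearMap.ker_eq_top.mp (top_le_iff.mp (hvs ▸ hker))
  have hlast : (A j (Fin.last d) : ℝ) = 0 := by
    have hv := hvert _ hVne.choose_spec
    rw [hL0] at hv
    simpa using hv
  have hA0 : ∀ l, A j l = 0 := by
    intro l
    induction l using Fin.lastCases with
    | last => exact_mod_cast hlast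
    | cast l =>
      have : L (Pi.single l 1) = 0 := by rw [hL0]; rfl
      rw [hL] at this
      simp only [linForm, LinearMap.coe_mk, AddHom.coe_mk] at this
      rw [Finset.sum_eq_single l (fun b _ hb => by simp [Pi.single_apply, hb])
        (fun hl => absurd (Finset.mem_univ l) hl)] at this
      simp only [Pi.single_eq_same, mul_one] at this
      exact_mod_cast this
  have : Finset.univ.gcd (A j) = 0 := Finset.gcd_eq_zero_iff.mpr fun l _ => hA0 l
  rw [hprim j] at this
  exact one_ne_zero this

theorem stmt7 {d m : ℕ} (P : Set (Fin d → ℝ)) (hP : IsRationalDPolytope P)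
    (A : Fin m → Fin (d + 1) → ℤ)
    -- the irredundant presentation `𝒞_P = ⋂ᵢ {x : ⟨ãᵢ, x⟩ ≥ 0}` by primitive `ãᵢ`
    (hpres : coneOver P = ⋂ i, {y : Fin (d + 1) → ℝ | 0 ≤ ∑ j, (A i j : ℝ) * y j})
    (hprim : ∀ i, Finset.univ.gcd (A i) = 1)
    (hirr : ∀ i : Fin m,
      (⋂ j ∈ Finset.univ.erase i, {y : Fin (d + 1) → ℝ | 0 ≤ ∑ l, (A j l : ℝ) * y l}) ≠
        coneOver P)
    (u v : Fin (d + 1) → ℝ) :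
    ((fun y => y + u) '' coneOver P ∩ latticePts (d + 1) =
        (fun y => y + v) '' coneOver P ∩ latticePts (d + 1)) ↔
      ∀ i, ⌈∑ j, (A i j : ℝ) * u j⌉ = ⌈∑ j, (A i j : ℝ) * v j⌉ := by
  -- membership characterization for integer points
  have hchar : ∀ (t : Fin (d + 1) → ℝ) (z : Fin (d + 1) → ℤ),
      ((fun l => (z l : ℝ)) ∈ (fun y => y + t) '' coneOver P) ↔
        ∀ i, ⌈∑ l, (A i l : ℝ) * t l⌉ ≤ ∑ l, A i l * z l := by
    intro t z
    have h1 : ((fun l => (z l : ℝ)) ∈ (fun y => y + t) '' coneOver P) ↔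
        ((fun l => (z l : ℝ)) - t) ∈ coneOver P := by
      constructor
      · rintro ⟨y, hy, hyt⟩
        exact eq_sub_of_add_eq hyt ▸ hy
      · intro h
        exact ⟨_, h, by ext l; simp⟩
    rw [h1, hpres, Set.mem_iInter]
    refine forall_congr' fun i => ?_
    rw [Set.mem_setOf_eq]
    have h2 : ∑ l, (A i l : ℝ) * ((fun l => (z l : ℝ)) - t) l
        = ((∑ l, A i l * z l : ℤ) : ℝ) - ∑ l, (A i l : ℝ) * t l := by
      push_cast
      rw [← Finset.sum_sub_distrib]
      exact Finset.sum_congr rfl fun l _ => by simp only [Pi.sub_apply]; ring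
    rw [h2, sub_nonneg]
    exact Int.ceil_le.symm
  have hlatt : ∀ z : Fin (d + 1) → ℤ, (fun l => (z l : ℝ)) ∈ latticePts (d + 1) :=
    fun z l => ⟨z l, rfl⟩
  -- the easy direction, as a one-sided inclusion
  have himp : ∀ u' v' : Fin (d + 1) → ℝ,
      (∀ i, ⌈∑ l, (A i l : ℝ) * u' l⌉ = ⌈∑ l, (A i l : ℝ) * v' l⌉) →
      (fun y => y + u') '' coneOver P ∩ latticePts (d + 1) ⊆
        (fun y => y + v') '' coneOver P ∩ latticePts (d + 1) := by
    intro u' v' hc x hx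
    obtain ⟨hx1, hx2⟩ := hx
    have hx2' : ∀ l, ∃ n : ℤ, x l = (n : ℝ) := hx2
    choose z hz using hx2'
    have hxz : x = fun l => (z l : ℝ) := funext hz
    rw [hxz] at hx1 ⊢
    refine ⟨?_, hlatt z⟩
    rw [hchar v' z]
    intro i
    rw [← hc i]
    exact (hchar u' z).mp hx1 i
  constructor
  swap
  · intro hc
    exact Set.Subset.antisymm (himp u v hc) (himp v u fun i => (hc i).symm)
  intro hset i
  -- Bezout coefficients for the primitive row `A i`
  obtain ⟨g, hg⟩ := finset_gcd_bezout Finset.univ (A i)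
  rw [hprim i] at hg
  -- a point where all forms are strictly positive, and an integer version
  obtain ⟨q, hq⟩ := exists_pos_point P hP A hpres hprim
  obtain ⟨qi, hqi⟩ := sign_int_point A q (fun j => ne_of_gt (hq j))
  have hqi1 : ∀ j, 1 ≤ ∑ l, A j l * qi l := fun j => (hqi j).1 (hq j)
  -- irredundancy gives a point violating only the `i`-th inequality
  have hsub : coneOver P ⊆
      ⋂ j ∈ Finset.univ.erase i, {y : Fin (d + 1) → ℝ | 0 ≤ ∑ l, (A j l : ℝ) * y l} := by
    rw [hpres]
    intro x hx
    rw [Set.mem_iInter₂]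
    intro j _
    exact Set.mem_iInter.mp hx j
  obtain ⟨p, hp1, hp2⟩ : ∃ p, p ∈ (⋂ j ∈ Finset.univ.erase i,
      {y : Fin (d + 1) → ℝ | 0 ≤ ∑ l, (A j l : ℝ) * y l}) ∧ p ∉ coneOver P := by
    by_contra hcon
    push_neg at hcon
    exact hirr i (Set.Subset.antisymm (fun x hx => hcon x hx) hsub)
  have hpj : ∀ j, j ≠ i → 0 ≤ ∑ l, (A j l : ℝ) * p l := by
    intro j hj
    exact Set.mem_iInter₂.mp hp1 j (Finset.mem_erase.mpr ⟨hj, Finset.mem_univ j⟩)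
  have hpi : ∑ l, (A i l : ℝ) * p l < 0 := by
    by_contra hcon
    push_neg at hcon
    apply hp2
    rw [hpres, Set.mem_iInter]
    intro j
    by_cases hj : j = i
    · subst hj; exact hcon
    · exact hpj j hj
  -- perturb to make all the other inequalities strict
  set ε : ℝ := -(∑ l, (A i l : ℝ) * p l) / (2 * ∑ l, (A i l : ℝ) * q l) with hε
  have hεpos : 0 < ε := div_pos (by linarith) (by linarith [hq i])
  set p' : Fin (d + 1) → ℝ := p + ε • q with hp'
  have hlin : ∀ j, ∑ l, (A j l : ℝ) * p' l
      = (∑ l, (A j l : ℝ) * p l) + ε * ∑ l, (A j l : ℝ) * q l := by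
    intro j
    rw [Finset.mul_sum, ← Finset.sum_add_distrib]
    refine Finset.sum_congr rfl fun l _ => ?_
    simp only [hp', Pi.add_apply, Pi.smul_apply, smul_eq_mul]
    ring
  have hp'i : ∑ l, (A i l : ℝ) * p' l < 0 := by
    have hfiq : (∑ l, (A i l : ℝ) * q l) ≠ 0 := ne_of_gt (hq i)
    have h2 : ε * (∑ l, (A i l : ℝ) * q l) = -(∑ l, (A i l : ℝ) * p l) / 2 := by
      rw [hε]; field_simp
    rw [hlin i, h2]
    linarith
  have hp'j : ∀ j, j ≠ i → 0 < ∑ l, (A j l : ℝ) * p' l := by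
    intro j hj
    rw [hlin j]
    have h1 := hpj j hj
    have h2 := mul_pos hεpos (hq j)
    linarith
  obtain ⟨r, hr⟩ := sign_int_point A p' (fun j => by
    by_cases hj : j = i
    · subst hj; exact ne_of_lt hp'i
    · exact ne_of_gt (hp'j j hj))
  have hri : ∑ l, A i l * r l ≤ -1 := (hr i).2 hp'i
  have hrj : ∀ j, j ≠ i → 1 ≤ ∑ l, A j l * r l := fun j hj => (hr j).1 (hp'j j hj)
  -- an integer point on the `i`-th hyperplane, strictly inside all other halfspaces
  set s : ℤ := ∑ l, A i l * qi l with hs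
  set tt : ℤ := -∑ l, A i l * r l with htt
  have hs1 : (1 : ℤ) ≤ s := hqi1 i
  have ht1 : (1 : ℤ) ≤ tt := by rw [htt]; linarith [hri]
  set w : Fin (d + 1) → ℤ := fun l => tt * qi l + s * r l with hw
  have hwsum : ∀ j, ∑ l, A j l * w l
      = tt * (∑ l, A j l * qi l) + s * (∑ l, A j l * r l) := by
    intro j
    rw [Finset.mul_sum, Finset.mul_sum, ← Finset.sum_add_distrib]
    refine Finset.sum_congr rfl fun l _ => ?_
    rw [hw]; ring
  have hwi : ∑ l, A i l * w l = 0 := by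
    have h5 : ∑ l, A i l * r l = -tt := by rw [htt]; ring
    rw [hwsum i, h5]; ring
  have hwj : ∀ j, j ≠ i → 1 ≤ ∑ l, A j l * w l := by
    intro j hj
    rw [hwsum j]
    have h1 := hqi1 j
    have h2 := hrj j hj
    have h3 := mul_le_mul_of_nonneg_left h1 (by linarith : (0 : ℤ) ≤ tt)
    have h4 := mul_le_mul_of_nonneg_left h2 (by linarith : (0 : ℤ) ≤ s)
    linarith
  -- key one-sided estimate
  have key : ∀ u' v' : Fin (d + 1) → ℝ,
      (fun y => y + u') '' coneOver P ∩ latticePts (d + 1) ⊆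
        (fun y => y + v') '' coneOver P ∩ latticePts (d + 1) →
      ⌈∑ l, (A i l : ℝ) * v' l⌉ ≤ ⌈∑ l, (A i l : ℝ) * u' l⌉ := by
    intro u' v' hsub'
    set c : ℤ := ⌈∑ l, (A i l : ℝ) * u' l⌉ with hc
    set K : ℤ := ∑ j, |⌈∑ l, (A j l : ℝ) * u' l⌉ - c * ∑ l, A j l * g l| with hK
    have hK0 : (0 : ℤ) ≤ K := Finset.sum_nonneg fun j _ => abs_nonneg _
    have hKj : ∀ j, ⌈∑ l, (A j l : ℝ) * u' l⌉ - c * ∑ l, A j l * g l ≤ K := by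
      intro j
      calc ⌈∑ l, (A j l : ℝ) * u' l⌉ - c * ∑ l, A j l * g l
          ≤ |⌈∑ l, (A j l : ℝ) * u' l⌉ - c * ∑ l, A j l * g l| := le_abs_self _
        _ ≤ K := Finset.single_le_sum
            (f := fun j => |⌈∑ l, (A j l : ℝ) * u' l⌉ - c * ∑ l, A j l * g l|)
            (fun j _ => abs_nonneg _) (Finset.mem_univ j)
    set z : Fin (d + 1) → ℤ := fun l => c * g l + K * w l with hz
    have hzsum : ∀ j, ∑ l, A j l * z l
        = c * (∑ l, A j l * g l) + K * (∑ l, A j l * w l) := by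
      intro j
      rw [Finset.mul_sum, Finset.mul_sum, ← Finset.sum_add_distrib]
      refine Finset.sum_congr rfl fun l _ => ?_
      rw [hz]; ring
    have hzi : ∑ l, A i l * z l = c := by
      rw [hzsum i, hwi, hg]; ring
    have hmemu : ∀ j, ⌈∑ l, (A j l : ℝ) * u' l⌉ ≤ ∑ l, A j l * z l := by
      intro j
      by_cases hj : j = i
      · subst hj
        rw [hzi]
      · rw [hzsum j]
        have h1 := hwj j hj
        have h2 := hKj j
        have h3 := mul_le_mul_of_nonneg_left h1 hK0
        linarith
    have hin := hsub' ⟨(hchar u' z).mpr hmemu, hlatt z⟩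
    have hfin := (hchar v' z).mp hin.1 i
    rw [hzi] at hfin
    exact hfin
  exact le_antisymm (key v u hset.symm.subset) (key u v hset.subset)
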